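/- For any r1, r2 > 0 and two independent items with values drawn from equal revenue distributions ER_{r1} and ER_{r2}, the supremum revenue over deterministic menus equals the supremum revenue from selling only the grand bundle. More precisely, for any menu (a,b,c) with a ≤ b ≤ c, the menu (c,b,c) obtains at least as much expected revenue. -/

import Mathlib

open MeasureTheory

/-- Payment made by a utility-maximizing additive buyer with values `(v1, v2)` facing the
deterministic menu charging `a` for item 1, `b` for item 2, `c` for the pair;
ties are broken in favor of the higher payment. -/
noncomputable def pay (a b c v1 v2 : ℝ) : ℝ :=
  let u1 := v1 - a
  let u2 := v2 - b
  let u12 := v1 + v2 - c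
  let m := max (max 0 u1) (max u2 u12)
  max (if u1 = m then a else 0) (max (if u2 = m then b else 0) (if u12 = m then c else 0))

/-- Expected revenue of the menu `(a, b, c)` when values are drawn from `μ`. -/
noncomputable def rev (μ : Measure (ℝ × ℝ)) (a b c : ℝ) : ℝ :=
  ∫ v, pay a b c v.1 v.2 ∂μ

lemma pay_def (a b c v1 v2 : ℝ) : pay a b c v1 v2 =
    max (if v1 - a = max (max 0 (v1 - a)) (max (v2 - b) (v1 + v2 - c)) then a else 0)
      (max (if v2 - b = max (max 0 (v1 - a)) (max (v2 - b) (v1 + v2 - c)) then b else 0)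
        (if v1 + v2 - c = max (max 0 (v1 - a)) (max (v2 - b) (v1 + v2 - c)) then c else 0)) := rfl

lemma abs_pay_le (a b c v1 v2 : ℝ) : |pay a b c v1 v2| ≤ |a| + |b| + |c| := by
  rw [pay_def, abs_le]
  constructor
  · have h1 : -(|a| + |b| + |c|) ≤ (if v1 - a = max (max 0 (v1 - a)) (max (v2 - b) (v1 + v2 - c)) then a else 0) := by
      split_ifs <;> [skip; skip] <;>
        nlinarith [abs_nonneg a, abs_nonneg b, abs_nonneg c, neg_abs_le a]
    exact le_trans h1 (le_max_left _ _)
  · refine max_le ?_ (max_le ?_ ?_) <;> split_ifs <;>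
      nlinarith [abs_nonneg a, abs_nonneg b, abs_nonneg c, le_abs_self a, le_abs_self b, le_abs_self c]

lemma measurable_pay (a b c : ℝ) : Measurable (fun z : ℝ × ℝ => pay a b c z.1 z.2) := by
  simp only [pay_def]
  have h1 : Measurable fun z : ℝ × ℝ => z.1 - a := measurable_fst.sub measurable_const
  have h2 : Measurable fun z : ℝ × ℝ => z.2 - b := measurable_snd.sub measurable_const
  have h12 : Measurable fun z : ℝ × ℝ => z.1 + z.2 - c :=
    (measurable_fst.add measurable_snd).sub measurable_const
  have hm : Measurable fun z : ℝ × ℝ =>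
      max (max 0 (z.1 - a)) (max (z.2 - b) (z.1 + z.2 - c)) :=
    (measurable_const.max h1).max (h2.max h12)
  exact ((Measurable.ite (measurableSet_eq_fun h1 hm) measurable_const measurable_const).max
    ((Measurable.ite (measurableSet_eq_fun h2 hm) measurable_const measurable_const).max
      (Measurable.ite (measurableSet_eq_fun h12 hm) measurable_const measurable_const)))

lemma integrable_pay (a b c : ℝ) (μ : Measure (ℝ × ℝ)) [IsFiniteMeasure μ] :
    Integrable (fun z : ℝ × ℝ => pay a b c z.1 z.2) μ :=
  (integrable_const (|a| + |b| + |c|)).mono' (measurable_pay a b c).aestronglyMeasurable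
    (Filter.Eventually.of_forall fun z => by
      simpa using abs_pay_le a b c z.1 z.2)

lemma integrable_pay_left (a b c v2 : ℝ) (μ : Measure ℝ) [IsFiniteMeasure μ] :
    Integrable (fun v1 : ℝ => pay a b c v1 v2) μ := by
  have : Measurable (fun v1 : ℝ => pay a b c v1 v2) :=
    (measurable_pay a b c).comp (measurable_id.prodMk measurable_const)
  exact (integrable_const (|a| + |b| + |c|)).mono' this.aestronglyMeasurable
    (Filter.Eventually.of_forall fun v1 => by simpa using abs_pay_le a b c v1 v2)
lemma pay_eq_ind1 (a b c v1 v2 : ℝ) (ha : 0 ≤ a) (h2b : v2 < b) (h2c : v2 < c - a) :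
    pay a b c v1 v2 = if a ≤ v1 then a else 0 := by
  rw [pay_def]
  have hm : max (max 0 (v1 - a)) (max (v2 - b) (v1 + v2 - c)) = max 0 (v1 - a) := by
    rw [max_eq_left]
    refine max_le ?_ ?_
    · have : v2 - b < 0 := by linarith
      exact le_trans this.le (le_max_left _ _)
    · have : v1 + v2 - c < v1 - a := by linarith
      exact le_trans this.le (le_max_right _ _)
  rw [hm]
  by_cases h1 : a ≤ v1
  · have hmax : max 0 (v1 - a) = v1 - a := max_eq_right (by linarith)
    rw [if_pos hmax.symm, if_neg (by rw [hmax]; intro h; linarith), if_neg (by rw [hmax]; intro h; linarith), if_pos h1]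
    simp [ha]
  · have hmax : max 0 (v1 - a) = 0 := max_eq_left (by linarith)
    rw [if_neg (by rw [hmax]; intro h; linarith), if_neg (by rw [hmax]; intro h; linarith),
      if_neg (by rw [hmax]; intro h; linarith), if_neg h1]
    simp

/-- Case `v2 < b`, `0 ≤ v2`: the buyer facing `(c,b,c)` buys the bundle iff `v1 + v2 ≥ c`. -/
lemma pay_eq_ind2 (b c v1 v2 : ℝ) (h2b : v2 < b) (h2 : 0 ≤ v2) (hbc : b ≤ c) :
    pay c b c v1 v2 = if c - v2 ≤ v1 then c else 0 := by
  rw [pay_def]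
  have hc : 0 ≤ c := by linarith
  by_cases h12 : c - v2 ≤ v1
  · have hm : max (max 0 (v1 - c)) (max (v2 - b) (v1 + v2 - c)) = v1 + v2 - c := by
      refine le_antisymm (max_le (max_le ?_ ?_) (max_le ?_ ?_))
        (le_max_of_le_right (le_max_right _ _)) <;> linarith
    rw [hm, if_pos h12, if_pos rfl]
    refine le_antisymm (max_le ?_ (max_le ?_ le_rfl)) (le_max_of_le_right (le_max_right _ _))
    · split_ifs <;> linarith
    · split_ifs <;> linarith
  · have hm : max (max 0 (v1 - c)) (max (v2 - b) (v1 + v2 - c)) = 0 := by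
      refine le_antisymm (max_le (max_le le_rfl ?_) (max_le ?_ ?_))
        (le_max_of_le_left (le_max_left _ _)) <;> linarith
    rw [hm, if_neg h12, if_neg (by intro h; linarith), if_neg (by intro h; linarith),
      if_neg (by intro h; linarith)]
    simp

/-- Case `c - a ≤ v2`: menus `(a,b,c)` and `(c,b,c)` extract the same payment. -/
lemma pay_eq_pay (a b c v1 v2 : ℝ) (ha : 0 ≤ a) (hab : a ≤ b) (hbc : b ≤ c)
    (h2 : 0 ≤ v2) (h2c : c - a ≤ v2) : pay a b c v1 v2 = pay c b c v1 v2 := by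
  rw [pay_def, pay_def]
  have h1 : v1 - a ≤ v1 + v2 - c := by linarith
  have h1' : v1 - c ≤ v1 + v2 - c := by linarith
  have hm : max (max 0 (v1 - a)) (max (v2 - b) (v1 + v2 - c))
      = max (max 0 (v2 - b)) (v1 + v2 - c) := by
    refine le_antisymm (max_le (max_le ?_ ?_) (max_le ?_ ?_))
      (max_le (max_le ?_ ?_) ?_)
    · exact le_max_of_le_left (le_max_left _ _)
    · exact le_trans h1 (le_max_right _ _)
    · exact le_max_of_le_left (le_max_right _ _)
    · exact le_max_right _ _
    · exact le_max_of_le_left (le_max_left _ _)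
    · exact le_max_of_le_right (le_max_left _ _)
    · exact le_max_of_le_right (le_max_right _ _)
  have hm' : max (max 0 (v1 - c)) (max (v2 - b) (v1 + v2 - c))
      = max (max 0 (v2 - b)) (v1 + v2 - c) := by
    refine le_antisymm (max_le (max_le ?_ ?_) (max_le ?_ ?_))
      (max_le (max_le ?_ ?_) ?_)
    · exact le_max_of_le_left (le_max_left _ _)
    · exact le_trans h1' (le_max_right _ _)
    · exact le_max_of_le_left (le_max_right _ _)
    · exact le_max_right _ _
    · exact le_max_of_le_left (le_max_left _ _)
    · exact le_max_of_le_right (le_max_left _ _)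
    · exact le_max_of_le_right (le_max_right _ _)
  rw [hm, hm']
  set M := max (max 0 (v2 - b)) (v1 + v2 - c) with hM
  have hu12 : v1 + v2 - c ≤ M := le_max_right _ _
  by_cases h12 : v1 + v2 - c = M
  · rw [if_pos h12]
    have e1 : max (if v1 - a = M then a else 0) (max (if v2 - b = M then b else 0) c) = c :=
      le_antisymm (max_le (by split_ifs <;> linarith)
        (max_le (by split_ifs <;> linarith) le_rfl)) (le_max_of_le_right (le_max_right _ _))
    have e2 : max (if v1 - c = M then c else 0) (max (if v2 - b = M then b else 0) c) = c :=
      le_antisymm (max_le (by split_ifs <;> linarith)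
        (max_le (by split_ifs <;> linarith) le_rfl)) (le_max_of_le_right (le_max_right _ _))
    rw [e1, e2]
  · have h1a : ¬(v1 - a = M) := by
      intro h
      exact h12 (le_antisymm hu12 (h ▸ h1))
    have h1c : ¬(v1 - c = M) := by
      intro h
      exact h12 (le_antisymm hu12 (h ▸ h1'))
    rw [if_neg h1a, if_neg h1c]

/-- Case `b ≤ v2`: menu `(c,b,c)` extracts at least `b`. -/
lemma le_pay_cbc (b c v1 v2 : ℝ) (hb2 : b ≤ v2) (h2 : 0 ≤ v2) (hbc : b ≤ c) :
    b ≤ pay c b c v1 v2 := by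
  rw [pay_def]
  set M := max (max 0 (v1 - c)) (max (v2 - b) (v1 + v2 - c)) with hM
  by_cases h12 : v1 + v2 - c = M
  · refine le_trans hbc (le_max_of_le_right (le_max_of_le_right ?_))
    rw [if_pos h12]
  · have hMle : M ≤ max (v2 - b) (v1 + v2 - c) := by
      refine max_le (max_le ?_ ?_) le_rfl
      · exact le_max_of_le_left (by linarith)
      · exact le_max_of_le_right (by linarith)
    have h2eq : v2 - b = M := by
      rcases max_choice (v2 - b) (v1 + v2 - c) with h | h
      · exact le_antisymm (le_max_of_le_right (le_max_left _ _))
          (le_trans hMle h.le)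
      · exact absurd (le_antisymm (le_max_of_le_right (le_max_right _ _))
          (le_trans hMle h.le)) h12
    refine le_max_of_le_right (le_max_of_le_left ?_)
    rw [if_pos h2eq]

/-- Case `v2 < c - a`: menu `(a,b,c)` extracts at most `b`. -/
lemma pay_abc_le (a b c v1 v2 : ℝ) (ha : 0 ≤ a) (hab : a ≤ b) (h2c : v2 < c - a) :
    pay a b c v1 v2 ≤ b := by
  rw [pay_def]
  have hb : 0 ≤ b := le_trans ha hab
  have h12 : ¬(v1 + v2 - c = max (max 0 (v1 - a)) (max (v2 - b) (v1 + v2 - c))) := by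
    intro h
    have h1 : v1 - a ≤ max (max 0 (v1 - a)) (max (v2 - b) (v1 + v2 - c)) :=
      le_max_of_le_left (le_max_right _ _)
    rw [← h] at h1
    linarith
  refine max_le ?_ (max_le ?_ ?_)
  · split_ifs <;> linarith
  · split_ifs <;> linarith
  · rw [if_neg h12]
    exact hb

/-- Symmetry of `pay` under swapping the two items. -/
lemma pay_comm (a b c x y : ℝ) : pay a b c x y = pay b a c y x := by
  rw [pay_def, pay_def]
  have h : y + x - c = x + y - c := by ring
  rw [h]
  have hm : max (max 0 (y - b)) (max (x - a) (x + y - c))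
      = max (max 0 (x - a)) (max (y - b) (x + y - c)) := by
    rw [max_max_max_comm]
  rw [hm, max_left_comm]
lemma pay_le_pay_point (a b c v1 v2 : ℝ) (ha : 0 ≤ a) (hab : a ≤ b) (hbc : b ≤ c)
    (h2 : 0 ≤ v2) (h : b ≤ v2 ∨ c - a ≤ v2) : pay a b c v1 v2 ≤ pay c b c v1 v2 := by
  by_cases h' : c - a ≤ v2
  · exact (pay_eq_pay a b c v1 v2 ha hab hbc h2 h').le
  · rcases h with h | h
    · exact le_trans (pay_abc_le a b c v1 v2 ha hab (not_le.mp h'))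
        (le_pay_cbc b c v1 v2 h h2 hbc)
    · exact absurd h h'

lemma psi_eq (r p : ℝ) (hp : 0 < p) : min 1 (r / p) * p = min p r := by
  rcases le_total (r / p) 1 with h | h
  · rw [min_eq_right h, div_mul_cancel₀ _ hp.ne', min_eq_right ((div_le_one hp).mp h)]
  · rw [min_eq_left h, one_mul, min_eq_left ((one_le_div hp).mp h)]

lemma key (r s : ℝ) (hr : 0 < r) (hs : 0 < s) (μ ν : Measure ℝ)
    [IsProbabilityMeasure μ] [IsProbabilityMeasure ν]
    (hμ : ∀ p : ℝ, 0 < p → (μ (Set.Ici p)).toReal = min 1 (r / p))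
    (hν : ν (Set.Ici s) = 1)
    (a b c : ℝ) (ha : 0 ≤ a) (hab : a ≤ b) (hbc : b ≤ c) :
    rev (μ.prod ν) a b c ≤ rev (μ.prod ν) c b c := by
  have hac : a ≤ c := hab.trans hbc
  have hb : 0 ≤ b := ha.trans hab
  have hc : 0 ≤ c := hb.trans hbc
  rw [rev, rev, integral_prod_symm _ (integrable_pay a b c _),
    integral_prod_symm _ (integrable_pay c b c _)]
  have hae : ∀ᵐ v2 ∂ν, s ≤ v2 := by
    rw [ae_iff]
    have : {y : ℝ | ¬ s ≤ y} = (Set.Ici s)ᶜ := by ext y; simp [Set.mem_Ici]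
    rw [this, (prob_compl_eq_zero_iff measurableSet_Ici).mpr hν]
  refine integral_mono_ae ((integrable_pay a b c (μ.prod ν)).integral_prod_right)
    ((integrable_pay c b c (μ.prod ν)).integral_prod_right) ?_
  filter_upwards [hae] with v2 hv2
  have h2 : 0 ≤ v2 := le_trans hs.le hv2
  show (∫ v1, pay a b c v1 v2 ∂μ) ≤ ∫ v1, pay c b c v1 v2 ∂μ
  by_cases hcase : b ≤ v2 ∨ c - a ≤ v2
  · exact integral_mono (integrable_pay_left a b c v2 μ) (integrable_pay_left c b c v2 μ)
      (fun v1 => pay_le_pay_point a b c v1 v2 ha hab hbc h2 hcase)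
  · push_neg at hcase
    obtain ⟨h2b, h2c⟩ := hcase
    have hq : a < c - v2 := by linarith
    have hq0 : 0 < c - v2 := lt_of_le_of_lt ha hq
    calc (∫ v1, pay a b c v1 v2 ∂μ)
        = ∫ v1, (Set.Ici a).indicator (fun _ => a) v1 ∂μ := by
          refine integral_congr_ae (Filter.Eventually.of_forall fun v1 => ?_)
          show pay a b c v1 v2 = _
          rw [pay_eq_ind1 a b c v1 v2 ha h2b h2c]
          simp [Set.indicator_apply, Set.mem_Ici]
      _ = (μ (Set.Ici a)).toReal • a := integral_indicator_const a measurableSet_Ici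
      _ ≤ (μ (Set.Ici (c - v2))).toReal • c := by
          rcases eq_or_lt_of_le ha with h0 | h0
          · rw [← h0]
            simp only [smul_eq_mul, mul_zero]
            exact mul_nonneg ENNReal.toReal_nonneg hc
          · simp only [smul_eq_mul]
            rw [hμ a h0, hμ (c - v2) hq0]
            calc min 1 (r / a) * a = min a r := psi_eq r a h0
              _ ≤ min (c - v2) r := min_le_min hq.le le_rfl
              _ = min 1 (r / (c - v2)) * (c - v2) := (psi_eq r (c - v2) hq0).symm
              _ ≤ min 1 (r / (c - v2)) * c := by
                  refine mul_le_mul_of_nonneg_left (by linarith) ?_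
                  exact le_min zero_le_one (by positivity)
      _ = ∫ v1, (Set.Ici (c - v2)).indicator (fun _ => c) v1 ∂μ :=
          (integral_indicator_const c measurableSet_Ici).symm
      _ = ∫ v1, pay c b c v1 v2 ∂μ := by
          refine integral_congr_ae (Filter.Eventually.of_forall fun v1 => ?_)
          show _ = pay c b c v1 v2
          rw [pay_eq_ind2 b c v1 v2 h2b h2 hbc]
          simp [Set.indicator_apply, Set.mem_Ici]
lemma rev_swap (μ ν : Measure ℝ) [SFinite μ] [SFinite ν] (a b c : ℝ) :
    rev (μ.prod ν) a b c = rev (ν.prod μ) b a c := by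
  rw [rev, rev, ← integral_prod_swap (fun z : ℝ × ℝ => pay a b c z.1 z.2)]
  refine integral_congr_ae (Filter.Eventually.of_forall fun z => ?_)
  show pay a b c z.2 z.1 = pay b a c z.1 z.2
  exact (pay_comm b a c z.1 z.2).symm

lemma pay_le_sum (a b c : ℝ) (ha : 0 ≤ a) (hb : 0 ≤ b) (hc : 0 ≤ c) (z : ℝ × ℝ) :
    pay a b c z.1 z.2 ≤ (Set.Ici a ×ˢ (Set.univ : Set ℝ)).indicator (fun _ => a) z
      + ((Set.univ : Set ℝ) ×ˢ Set.Ici b).indicator (fun _ => b) z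
      + {w : ℝ × ℝ | c ≤ w.1 + w.2}.indicator (fun _ => c) z := by
  obtain ⟨x, y⟩ := z
  have i1 : 0 ≤ (Set.Ici a ×ˢ (Set.univ : Set ℝ)).indicator (fun _ => a) (x, y) :=
    Set.indicator_nonneg (fun _ _ => ha) _
  have i2 : 0 ≤ ((Set.univ : Set ℝ) ×ˢ Set.Ici b).indicator (fun _ => b) (x, y) :=
    Set.indicator_nonneg (fun _ _ => hb) _
  have i3 : 0 ≤ {w : ℝ × ℝ | c ≤ w.1 + w.2}.indicator (fun _ => c) (x, y) :=
    Set.indicator_nonneg (fun _ _ => hc) _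
  rw [pay_def]
  have hM0 : (0:ℝ) ≤ max (max 0 (x - a)) (max (y - b) (x + y - c)) :=
    le_max_of_le_left (le_max_left _ _)
  refine max_le ?_ (max_le ?_ ?_)
  · split_ifs with h
    · have hx : a ≤ x := by linarith [h ▸ hM0]
      have : (Set.Ici a ×ˢ (Set.univ : Set ℝ)).indicator (fun _ => a) (x, y) = a :=
        Set.indicator_of_mem (by simp [Set.mem_Ici, hx]) _
      linarith
    · linarith
  · split_ifs with h
    · have hy : b ≤ y := by linarith [h ▸ hM0]
      have : ((Set.univ : Set ℝ) ×ˢ Set.Ici b).indicator (fun _ => b) (x, y) = b :=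
        Set.indicator_of_mem (by simp [Set.mem_Ici, hy]) _
      linarith
    · linarith
  · split_ifs with h
    · have hxy : c ≤ x + y := by linarith [h ▸ hM0]
      have : {w : ℝ × ℝ | c ≤ w.1 + w.2}.indicator (fun _ => c) (x, y) = c :=
        Set.indicator_of_mem (by simpa using hxy) _
      linarith
    · linarith

lemma pay_zero (x y : ℝ) : pay 0 0 0 x y = 0 := by
  rw [pay_def]; simp

lemma rev_bound (r1 r2 : ℝ) (hr1 : 0 < r1) (hr2 : 0 < r2)
    (μ1 μ2 : Measure ℝ) [IsProbabilityMeasure μ1] [IsProbabilityMeasure μ2]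
    (hER1 : ∀ p : ℝ, 0 < p → (μ1 (Set.Ici p)).toReal = min 1 (r1 / p))
    (hER2 : ∀ p : ℝ, 0 < p → (μ2 (Set.Ici p)).toReal = min 1 (r2 / p))
    (a b c : ℝ) (ha : 0 ≤ a) (hb : 0 ≤ b) (hc : max a b ≤ c) :
    rev (μ1.prod μ2) a b c ≤ 3 * (r1 + r2) := by
  have hc0 : 0 ≤ c := le_trans (le_trans ha (le_max_left a b)) hc
  rcases eq_or_lt_of_le hc0 with h0 | hcpos
  · have hae : a = 0 := le_antisymm (by calc a ≤ max a b := le_max_left _ _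
      _ ≤ c := hc
      _ = 0 := h0.symm) ha
    have hbe : b = 0 := le_antisymm (by calc b ≤ max a b := le_max_right _ _
      _ ≤ c := hc
      _ = 0 := h0.symm) hb
    rw [hae, hbe, ← h0, rev]
    simp only [pay_zero, integral_zero]
    positivity
  · set S1 : Set (ℝ × ℝ) := Set.Ici a ×ˢ (Set.univ : Set ℝ) with hS1
    set S2 : Set (ℝ × ℝ) := (Set.univ : Set ℝ) ×ˢ Set.Ici b with hS2
    set S3 : Set (ℝ × ℝ) := {w : ℝ × ℝ | c ≤ w.1 + w.2} with hS3
    have m1 : MeasurableSet S1 := measurableSet_Ici.prod MeasurableSet.univ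
    have m2 : MeasurableSet S2 := MeasurableSet.univ.prod measurableSet_Ici
    have m3 : MeasurableSet S3 :=
      measurableSet_le measurable_const (measurable_fst.add measurable_snd)
    have int1 : Integrable (S1.indicator (fun _ => a)) (μ1.prod μ2) :=
      (integrable_const a).indicator m1
    have int2 : Integrable (S2.indicator (fun _ => b)) (μ1.prod μ2) :=
      (integrable_const b).indicator m2
    have int3 : Integrable (S3.indicator (fun _ => c)) (μ1.prod μ2) :=
      (integrable_const c).indicator m3
    have step1 : rev (μ1.prod μ2) a b c ≤ ∫ z, (S1.indicator (fun _ => a) z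
        + S2.indicator (fun _ => b) z + S3.indicator (fun _ => c) z) ∂(μ1.prod μ2) := by
      rw [rev]
      exact integral_mono (integrable_pay a b c _) ((int1.add int2).add int3)
        (pay_le_sum a b c ha hb hc0)
    have step2 : ∫ z, (S1.indicator (fun _ => a) z
        + S2.indicator (fun _ => b) z + S3.indicator (fun _ => c) z) ∂(μ1.prod μ2)
        = ((μ1.prod μ2) S1).toReal * a + ((μ1.prod μ2) S2).toReal * b
          + ((μ1.prod μ2) S3).toReal * c := by
      have int1' : Integrable (fun z => S1.indicator (fun _ => a) z) (μ1.prod μ2) := int1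
      have int2' : Integrable (fun z => S2.indicator (fun _ => b) z) (μ1.prod μ2) := int2
      have q1 : ∫ z, (S1.indicator (fun _ => a) z + S2.indicator (fun _ => b) z)
            + S3.indicator (fun _ => c) z ∂(μ1.prod μ2)
          = (∫ z, S1.indicator (fun _ => a) z + S2.indicator (fun _ => b) z ∂(μ1.prod μ2))
            + ∫ z, S3.indicator (fun _ => c) z ∂(μ1.prod μ2) :=
        integral_add (int1'.add int2') int3
      have q2 : ∫ z, S1.indicator (fun _ => a) z + S2.indicator (fun _ => b) z ∂(μ1.prod μ2)
          = (∫ z, S1.indicator (fun _ => a) z ∂(μ1.prod μ2))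
            + ∫ z, S2.indicator (fun _ => b) z ∂(μ1.prod μ2) :=
        integral_add int1' int2'
      rw [q1, q2, integral_indicator_const _ m1, integral_indicator_const _ m2,
        integral_indicator_const _ m3]
      simp [smul_eq_mul, Measure.real]
    have e1 : (μ1.prod μ2) S1 = μ1 (Set.Ici a) := by
      rw [hS1, Measure.prod_prod, measure_univ, mul_one]
    have e2 : (μ1.prod μ2) S2 = μ2 (Set.Ici b) := by
      rw [hS2, Measure.prod_prod, measure_univ, one_mul]
    have t1 : (μ1 (Set.Ici a)).toReal * a ≤ r1 := by
      rcases eq_or_lt_of_le ha with h | h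
      · rw [← h, mul_zero]; exact hr1.le
      · rw [hER1 a h]
        calc min 1 (r1 / a) * a ≤ (r1 / a) * a :=
              mul_le_mul_of_nonneg_right (min_le_right _ _) ha
          _ = r1 := div_mul_cancel₀ _ h.ne'
    have t2 : (μ2 (Set.Ici b)).toReal * b ≤ r2 := by
      rcases eq_or_lt_of_le hb with h | h
      · rw [← h, mul_zero]; exact hr2.le
      · rw [hER2 b h]
        calc min 1 (r2 / b) * b ≤ (r2 / b) * b :=
              mul_le_mul_of_nonneg_right (min_le_right _ _) hb
          _ = r2 := div_mul_cancel₀ _ h.ne'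
    have hhalf : 0 < c / 2 := by linarith
    have hsub : S3 ⊆ (Set.Ici (c/2) ×ˢ (Set.univ : Set ℝ)) ∪ ((Set.univ : Set ℝ) ×ˢ Set.Ici (c/2)) := by
      intro w hw
      by_contra hcon
      simp only [Set.mem_union, Set.mem_prod, Set.mem_Ici, Set.mem_univ, and_true, true_and,
        not_or, not_le] at hcon
      have : w.1 + w.2 < c := by linarith [hcon.1, hcon.2]
      exact absurd (hS3 ▸ hw) (by simpa using this)
    have hP3 : ((μ1.prod μ2) S3).toReal
        ≤ (μ1 (Set.Ici (c/2))).toReal + (μ2 (Set.Ici (c/2))).toReal := by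
      have hle : (μ1.prod μ2) S3 ≤ μ1 (Set.Ici (c/2)) + μ2 (Set.Ici (c/2)) := by
        calc (μ1.prod μ2) S3 ≤ (μ1.prod μ2) ((Set.Ici (c/2) ×ˢ (Set.univ : Set ℝ))
              ∪ ((Set.univ : Set ℝ) ×ˢ Set.Ici (c/2))) := measure_mono hsub
          _ ≤ (μ1.prod μ2) (Set.Ici (c/2) ×ˢ (Set.univ : Set ℝ))
              + (μ1.prod μ2) ((Set.univ : Set ℝ) ×ˢ Set.Ici (c/2)) := measure_union_le _ _
          _ = μ1 (Set.Ici (c/2)) + μ2 (Set.Ici (c/2)) := by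
              simp [Measure.prod_prod]
      calc ((μ1.prod μ2) S3).toReal
          ≤ (μ1 (Set.Ici (c/2)) + μ2 (Set.Ici (c/2))).toReal :=
            ENNReal.toReal_mono (ENNReal.add_ne_top.mpr
              ⟨measure_ne_top _ _, measure_ne_top _ _⟩) hle
        _ = (μ1 (Set.Ici (c/2))).toReal + (μ2 (Set.Ici (c/2))).toReal :=
            ENNReal.toReal_add (measure_ne_top _ _) (measure_ne_top _ _)
    have t3 : ((μ1.prod μ2) S3).toReal * c ≤ 2 * (r1 + r2) := by
      have h1 : (μ1 (Set.Ici (c/2))).toReal ≤ r1 / (c/2) := by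
        rw [hER1 _ hhalf]; exact min_le_right _ _
      have h2 : (μ2 (Set.Ici (c/2))).toReal ≤ r2 / (c/2) := by
        rw [hER2 _ hhalf]; exact min_le_right _ _
      calc ((μ1.prod μ2) S3).toReal * c ≤ (r1 / (c/2) + r2 / (c/2)) * c := by
            refine mul_le_mul_of_nonneg_right ?_ hc0
            linarith [hP3]
        _ = 2 * (r1 + r2) := by field_simp
    calc rev (μ1.prod μ2) a b c
        ≤ ((μ1.prod μ2) S1).toReal * a + ((μ1.prod μ2) S2).toReal * b
          + ((μ1.prod μ2) S3).toReal * c := step2 ▸ step1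
      _ ≤ r1 + r2 + 2 * (r1 + r2) := by
          rw [e1, e2]
          gcongr
      _ = 3 * (r1 + r2) := by ring

theorem stmt4 (r1 r2 : ℝ) (hr1 : 0 < r1) (hr2 : 0 < r2)
    (μ1 μ2 : Measure ℝ) [IsProbabilityMeasure μ1] [IsProbabilityMeasure μ2]
    (hER1 : ∀ p : ℝ, 0 < p → (μ1 (Set.Ici p)).toReal = min 1 (r1 / p))
    (hER2 : ∀ p : ℝ, 0 < p → (μ2 (Set.Ici p)).toReal = min 1 (r2 / p)) :
    (∀ a b c : ℝ, 0 ≤ a → a ≤ b → b ≤ c →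
      rev (μ1.prod μ2) a b c ≤ rev (μ1.prod μ2) c b c) ∧
    sSup {r : ℝ | ∃ a b c : ℝ, 0 ≤ a ∧ 0 ≤ b ∧ max a b ≤ c ∧ r = rev (μ1.prod μ2) a b c} =
      sSup {r : ℝ | ∃ p : ℝ, 0 ≤ p ∧ r = rev (μ1.prod μ2) p p p} := by
  have hν1 : μ1 (Set.Ici r1) = 1 := (ENNReal.toReal_eq_one_iff _).mp
    (by rw [hER1 r1 hr1, div_self hr1.ne', min_self])
  have hν2 : μ2 (Set.Ici r2) = 1 := (ENNReal.toReal_eq_one_iff _).mp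
    (by rw [hER2 r2 hr2, div_self hr2.ne', min_self])
  refine ⟨fun a b c ha hab hbc => key r1 r2 hr1 hr2 μ1 μ2 hER1 hν2 a b c ha hab hbc, ?_⟩
  set A := {r : ℝ | ∃ a b c : ℝ, 0 ≤ a ∧ 0 ≤ b ∧ max a b ≤ c ∧ r = rev (μ1.prod μ2) a b c}
    with hA
  set B := {r : ℝ | ∃ p : ℝ, 0 ≤ p ∧ r = rev (μ1.prod μ2) p p p} with hB
  have bddA : BddAbove A := by
    refine ⟨3 * (r1 + r2), ?_⟩
    rintro x ⟨a, b, c, ha, hb, hc, rfl⟩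
    exact rev_bound r1 r2 hr1 hr2 μ1 μ2 hER1 hER2 a b c ha hb hc
  have hBsubA : B ⊆ A := by
    rintro x ⟨p, hp, rfl⟩
    exact ⟨p, p, p, hp, hp, by simp, rfl⟩
  have bddB : BddAbove B := bddA.mono hBsubA
  have hnB : B.Nonempty := ⟨rev (μ1.prod μ2) 0 0 0, 0, le_rfl, rfl⟩
  apply le_antisymm
  · refine csSup_le (hnB.mono hBsubA) ?_
    rintro x ⟨a, b, c, ha, hb, hc, rfl⟩
    have hc0 : 0 ≤ c := le_trans (le_trans ha (le_max_left a b)) hc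
    have hstep : rev (μ1.prod μ2) a b c ≤ rev (μ1.prod μ2) c c c := by
      rcases le_total a b with h | h
      · have hbc : b ≤ c := le_trans (le_max_right a b) hc
        calc rev (μ1.prod μ2) a b c ≤ rev (μ1.prod μ2) c b c :=
              key r1 r2 hr1 hr2 μ1 μ2 hER1 hν2 a b c ha h hbc
          _ = rev (μ2.prod μ1) b c c := rev_swap μ1 μ2 c b c
          _ ≤ rev (μ2.prod μ1) c c c :=
              key r2 r1 hr2 hr1 μ2 μ1 hER2 hν1 b c c hb hbc le_rfl
          _ = rev (μ1.prod μ2) c c c := (rev_swap μ1 μ2 c c c).symm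
      · have hac : a ≤ c := le_trans (le_max_left a b) hc
        calc rev (μ1.prod μ2) a b c = rev (μ2.prod μ1) b a c := rev_swap μ1 μ2 a b c
          _ ≤ rev (μ2.prod μ1) c a c :=
              key r2 r1 hr2 hr1 μ2 μ1 hER2 hν1 b a c hb h hac
          _ = rev (μ1.prod μ2) a c c := (rev_swap μ1 μ2 a c c).symm
          _ ≤ rev (μ1.prod μ2) c c c :=
              key r1 r2 hr1 hr2 μ1 μ2 hER1 hν2 a c c ha hac le_rfl
    exact hstep.trans (le_csSup bddB ⟨c, hc0, rfl⟩)
  · exact csSup_le_csSup bddA hnB hBsubA
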